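/- Let X, V, W, Y be real Hilbert spaces, L : X → W and C : V → Y continuous linear maps, and K : V → W a continuous linear isomorphism. Set S := −(K⁻¹ ∘ L) : X → V, and T := Id_X + S* ∘ S where * denotes the Hilbert space adjoint. Let x†, x₀ ∈ X and u₀ ∈ V, and set u† := S x†. Then the following are equivalent: (1) there exist v_mod ∈ W and v_obs ∈ Y such that x† − x₀ = L* v_mod and u† − u₀ = K* v_mod + C* v_obs; (2) there exists v_obs ∈ Y such that T(x† − x₀) = −(K⁻¹ ∘ L)* ( C* v_obs + (K⁻¹ ∘ L) x₀ + u₀ ). -/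

import Mathlib

/-- Comparison of source conditions in the linear Hilbert space setting
(Section 6.2): for the linear model `Lx + Ku = 0` with `K` an isomorphism,
parameter-to-state map `S = −K⁻¹L`, `T = I + S*S`, and exact solution
`u† = S x†`, the all-at-once benchmark source condition
`x†−x₀ = L* v_mod`, `u†−u₀ = K* v_mod + C* v_obs` is equivalent to its
reformulation (6.4) after elimination of `v_mod`:
`T(x†−x₀) = −(K⁻¹L)*(C* v_obs + (K⁻¹L)x₀ + u₀)`. -/
theorem sourceCondition_equiv_linear_Hilbert
    {X V W Y : Type*}
    [NormedAddCommGroup X] [InnerProductSpace ℝ X] [CompleteSpace X]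
    [NormedAddCommGroup V] [InnerProductSpace ℝ V] [CompleteSpace V]
    [NormedAddCommGroup W] [InnerProductSpace ℝ W] [CompleteSpace W]
    [NormedAddCommGroup Y] [InnerProductSpace ℝ Y] [CompleteSpace Y]
    (L : X →L[ℝ] W) (C : V →L[ℝ] Y) (K : V ≃L[ℝ] W)
    (S : X →L[ℝ] V) (hS : S = -((K.symm : W →L[ℝ] V).comp L))
    (T : X →L[ℝ] X)
    (hT : T = ContinuousLinearMap.id ℝ X
        + (ContinuousLinearMap.adjoint S).comp S)
    (xdag x₀ : X) (udag u₀ : V) (hudag : udag = S xdag) :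
    (∃ (vmod : W) (vobs : Y),
      xdag - x₀ = ContinuousLinearMap.adjoint L vmod ∧
      udag - u₀ = ContinuousLinearMap.adjoint (K : V →L[ℝ] W) vmod
                    + ContinuousLinearMap.adjoint C vobs) ↔
    (∃ vobs : Y,
      T (xdag - x₀) =
        -(ContinuousLinearMap.adjoint ((K.symm : W →L[ℝ] V).comp L)
          (ContinuousLinearMap.adjoint C vobs
            + ((K.symm : W →L[ℝ] V).comp L) x₀ + u₀))) := by
  have hLM : ((K : V →L[ℝ] W)).comp ((K.symm : W →L[ℝ] V).comp L) = L := by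
    ext x; simp
  set M : X →L[ℝ] V := (K.symm : W →L[ℝ] V).comp L with hM
  set A : V →L[ℝ] X := ContinuousLinearMap.adjoint M with hA
  have hadjL : ContinuousLinearMap.adjoint L
      = A.comp (ContinuousLinearMap.adjoint ((K : V →L[ℝ] W))) := by
    rw [← hLM, ContinuousLinearMap.adjoint_comp]
  have hadjS : ContinuousLinearMap.adjoint S = -A := by
    rw [hS, map_neg]
  have hTd : ∀ d : X, T d = d + A (M d) := by
    intro d
    rw [hT]
    simp [hadjS, hS, ← hM, ← hA]
  constructor
  · rintro ⟨vmod, vobs, h1, h2⟩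
    refine ⟨vobs, ?_⟩
    have hKv : ContinuousLinearMap.adjoint ((K : V →L[ℝ] W)) vmod
        = (udag - u₀) - ContinuousLinearMap.adjoint C vobs := by rw [h2]; abel
    have h1' : xdag - x₀ = A ((udag - u₀) - ContinuousLinearMap.adjoint C vobs) := by
      rw [h1, hadjL, ContinuousLinearMap.comp_apply, hKv]
    rw [hTd, map_sub M, h1', ← map_add A, ← map_neg A]
    congr 1
    rw [hudag, hS]
    simp only [ContinuousLinearMap.neg_apply]
    abel
  · rintro ⟨vobs, h⟩
    rw [hTd, map_sub M] at h
    have hd : xdag - x₀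
        = A ((udag - u₀) - ContinuousLinearMap.adjoint C vobs) := by
      have : xdag - x₀ = -(A (ContinuousLinearMap.adjoint C vobs + M x₀ + u₀))
          - A (M xdag - M x₀) := by
        rw [← h]; abel
      rw [this, ← map_neg A, ← map_sub A, hudag, hS]
      congr 1
      simp only [ContinuousLinearMap.neg_apply]
      abel
    refine ⟨ContinuousLinearMap.adjoint ((K.symm : W →L[ℝ] V))
        ((udag - u₀) - ContinuousLinearMap.adjoint C vobs), vobs, ?_, ?_⟩
    · rw [hadjL, ContinuousLinearMap.comp_apply,
        ← ContinuousLinearMap.comp_apply (ContinuousLinearMap.adjoint ((K : V →L[ℝ] W))),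
        ← ContinuousLinearMap.adjoint_comp]
      have hid : ((K.symm : W →L[ℝ] V)).comp ((K : V →L[ℝ] W))
          = ContinuousLinearMap.id ℝ V := by ext v; simp
      rw [hid]
      simpa [ContinuousLinearMap.adjoint_id] using hd
    · rw [← ContinuousLinearMap.comp_apply, ← ContinuousLinearMap.adjoint_comp]
      have hid : ((K.symm : W →L[ℝ] V)).comp ((K : V →L[ℝ] W))
          = ContinuousLinearMap.id ℝ V := by ext v; simp
      rw [hid]
      simp only [ContinuousLinearMap.adjoint_id, ContinuousLinearMap.id_apply]
      abel
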